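/- The Stieltjes transform of the arcsine law on [−r,r], i.e. the measure with density (1/π)·1/√(r²−x²) on (−r,r), equals 1/√(z²−r²) for all z in the upper half-plane, where the square root is the principal branch mapping ℂ⁺ to ℂ⁺. -/

import Mathlib

open MeasureTheory Real

/-- The arcsine law on `(-r, r)`: density `(1/π)/√(r²−x²)`. -/
noncomputable def arcsineMeasure (r : ℝ) : Measure ℝ :=
  volume.withDensity fun x =>
    ENNReal.ofReal (if x ∈ Set.Ioo (-r) r then (1 / π) / Real.sqrt (r ^ 2 - x ^ 2) else 0)

/-- The Stieltjes transform of a measure on ℝ. -/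
noncomputable def stieltjes (μ : Measure ℝ) (z : ℂ) : ℂ :=
  ∫ x : ℝ, (z - (x : ℂ))⁻¹ ∂μ

/-- The square root `√(ρ e^{iθ}) = √ρ · e^{iθ/2}` with the argument θ taken in `[0, 2π)`,
which maps `ℂ⁺` to `ℂ⁺`. -/
noncomputable def sqrtUpper (w : ℂ) : ℂ :=
  (Real.sqrt ‖w‖ : ℂ) *
    Complex.exp (Complex.I * (((if 0 ≤ Complex.arg w then Complex.arg w
      else Complex.arg w + 2 * π) : ℝ) / 2))

open Filter Topology
open scoped NNReal ENNReal

set_option linter.unusedVariables false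
set_option maxHeartbeats 1000000

lemma sqrtUpper_sq (w : ℂ) : (sqrtUpper w) ^ 2 = w := by
  unfold sqrtUpper
  set θ : ℝ := if 0 ≤ Complex.arg w then Complex.arg w else Complex.arg w + 2 * π with hθ
  have h1 : ((Real.sqrt ‖w‖ : ℂ)) ^ 2 = (‖w‖ : ℂ) := by
    rw [← Complex.ofReal_pow, Real.sq_sqrt (norm_nonneg w)]
  have h2 : Complex.exp (Complex.I * ((θ : ℝ) / 2)) ^ 2 = Complex.exp (Complex.arg w * Complex.I) := by
    rw [← Complex.exp_nat_mul]
    by_cases h : 0 ≤ Complex.arg w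
    · rw [hθ]; simp only [h, if_pos]
      push_cast; ring_nf
    · rw [hθ]; simp only [h, if_neg, not_false_iff]
      rw [show ((2:ℕ):ℂ) * (Complex.I * ((↑(Complex.arg w + 2*π)) / 2)) =
        Complex.arg w * Complex.I + 2 * π * Complex.I by push_cast; ring]
      rw [Complex.exp_add, Complex.exp_two_pi_mul_I, mul_one]
  rw [mul_pow, h1, h2, Complex.norm_mul_exp_arg_mul_I]

lemma sqrtUpper_im_pos {w : ℂ} (hw : w ≠ 0) (ha : Complex.arg w ≠ 0) :
    0 < (sqrtUpper w).im := by
  unfold sqrtUpper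
  set θ : ℝ := if 0 ≤ Complex.arg w then Complex.arg w else Complex.arg w + 2 * π with hθ
  have hθpos : 0 < θ ∧ θ < 2 * π := by
    rw [hθ]
    by_cases h : 0 ≤ Complex.arg w
    · simp only [h, if_pos]
      refine ⟨lt_of_le_of_ne h (Ne.symm ha), lt_of_le_of_lt (Complex.arg_le_pi w) ?_⟩
      linarith [Real.pi_pos]
    · simp only [h, if_neg, not_false_iff]
      push_neg at h
      constructor
      · linarith [Complex.neg_pi_lt_arg w, Real.pi_pos]
      · linarith
  have him : (Complex.I * ((θ:ℝ)/2)) = ((θ/2 : ℝ) : ℂ) * Complex.I := by push_cast; ring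
  rw [him]
  have : ((Real.sqrt ‖w‖ : ℂ) * Complex.exp (((θ/2:ℝ):ℂ) * Complex.I)).im
      = Real.sqrt ‖w‖ * Real.sin (θ/2) := by
    rw [Complex.im_ofReal_mul, Complex.exp_im]
    simp
  rw [this]
  have h1 : 0 < Real.sqrt ‖w‖ := Real.sqrt_pos.2 (norm_pos_iff.mpr hw)
  have h2 : 0 < Real.sin (θ/2) :=
    Real.sin_pos_of_pos_of_lt_pi (by linarith [hθpos.1]) (by linarith [hθpos.2])
  positivity

lemma sqrtUpper_eq {w V : ℂ} (hw : w ≠ 0) (ha : Complex.arg w ≠ 0)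
    (hV : V ^ 2 = w) (hVim : 0 < V.im) : sqrtUpper w = V := by
  have h1 : (sqrtUpper w) ^ 2 = V ^ 2 := by rw [sqrtUpper_sq, hV]
  have h2 : (sqrtUpper w - V) * (sqrtUpper w + V) = 0 := by ring_nf; linear_combination h1
  rcases mul_eq_zero.1 h2 with h | h
  · exact sub_eq_zero.1 h
  · exfalso
    have : (sqrtUpper w).im + V.im = 0 := by
      have := congrArg Complex.im h
      simpa using this
    linarith [sqrtUpper_im_pos hw ha]


section
variable {r : ℝ} {z : ℂ}


lemma aux_sub_ne (hz : 0 < z.im) : z - (r:ℂ) ≠ 0 := by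
  intro h; have := congrArg Complex.im h; simp at this; linarith

lemma aux_add_ne (hz : 0 < z.im) : z + (r:ℂ) ≠ 0 := by
  intro h; have := congrArg Complex.im h; simp at this; linarith

lemma aux_c_im (hz : 0 < z.im) (hr : 0 < r) :
    ((z + r) / (z - r)).im = -2 * r * z.im / Complex.normSq (z - r) := by
  rw [Complex.div_im]
  simp only [Complex.add_im, Complex.sub_im, Complex.add_re, Complex.sub_re,
    Complex.ofReal_re, Complex.ofReal_im]
  ring

lemma aux_cim_neg (hz : 0 < z.im) (hr : 0 < r) : ((z + r) / (z - r)).im < 0 := by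
  have hD : 0 < Complex.normSq (z - r) := Complex.normSq_pos.2 (aux_sub_ne hz)
  rw [aux_c_im hz hr]
  have : 0 < 2 * r * z.im := by positivity
  apply div_neg_of_neg_of_pos (by linarith) hD

lemma aux_s_re_pos (hz : 0 < z.im) (hr : 0 < r) :
    0 < (Complex.exp ((((1:ℝ)/2 : ℝ) : ℂ) * Complex.log ((z + r) / (z - r)))).re := by
  set c := (z + r) / (z - r) with hc
  have harg1 : Complex.arg c < 0 := Complex.arg_neg_iff.2 (aux_cim_neg hz hr)
  have harg2 : -π < Complex.arg c := Complex.neg_pi_lt_arg c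
  rw [Complex.exp_re, Complex.im_ofReal_mul, Complex.log_im]
  have hcos : 0 < Real.cos (1/2 * Complex.arg c) :=
    Real.cos_pos_of_mem_Ioo ⟨by linarith, by linarith [Real.pi_pos]⟩
  positivity

lemma aux_s_im_neg (hz : 0 < z.im) (hr : 0 < r) :
    (Complex.exp ((((1:ℝ)/2 : ℝ) : ℂ) * Complex.log ((z + r) / (z - r)))).im < 0 := by
  set c := (z + r) / (z - r) with hc
  have harg1 : Complex.arg c < 0 := Complex.arg_neg_iff.2 (aux_cim_neg hz hr)
  have harg2 : -π < Complex.arg c := Complex.neg_pi_lt_arg c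
  rw [Complex.exp_im, Complex.im_ofReal_mul, Complex.log_im]
  have hsin : Real.sin (1/2 * Complex.arg c) < 0 := by
    apply Real.sin_neg_of_neg_of_neg_pi_lt (by linarith)
    linarith [Real.pi_pos]
  have hexp : 0 < Real.exp ((((1:ℝ)/2 : ℝ) : ℂ) * Complex.log c).re := Real.exp_pos _
  exact mul_neg_of_pos_of_neg hexp hsin

-- the denominator never vanishes for real t
lemma aux_den_ne (hz : 0 < z.im) (t : ℝ) : (z - r) * (t:ℂ) ^ 2 + (z + r) ≠ 0 := by
  intro h
  have := congrArg Complex.im h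
  simp only [Complex.add_im, Complex.mul_im, Complex.sub_im, Complex.sub_re,
    Complex.ofReal_im, Complex.ofReal_re, Complex.zero_im] at this
  rw [show ((t:ℂ) ^ 2).im = 0 by simp [pow_two, Complex.mul_im],
      show ((t:ℂ) ^ 2).re = t ^ 2 by simp [pow_two, Complex.mul_re]] at this
  nlinarith [sq_nonneg t]

lemma aux_integral_Ioi (hz : 0 < z.im) (hr : 0 < r) :
    ∫ t in Set.Ioi (0:ℝ), (2:ℂ) * ((z - r) * (t:ℂ) ^ 2 + (z + r))⁻¹
      = ↑π / ((z - r) * Complex.exp ((((1:ℝ)/2 : ℝ) : ℂ)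
          * Complex.log ((z + r) / (z - r)))) := by
  set c := (z + r) / (z - r) with hc
  set s := Complex.exp ((((1:ℝ)/2 : ℝ) : ℂ) * Complex.log c) with hs
  have hc0 : c ≠ 0 := div_ne_zero (aux_add_ne hz) (aux_sub_ne hz)
  have hs2 : s ^ 2 = c := by
    rw [hs, pow_two, ← Complex.exp_add]
    rw [show (((1:ℝ)/2 : ℝ) : ℂ) * Complex.log c + (((1:ℝ)/2 : ℝ) : ℂ) * Complex.log c
      = Complex.log c by push_cast; ring]
    exact Complex.exp_log hc0
  have hp : 0 < s.re := aux_s_re_pos hz hr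
  have hq : s.im < 0 := aux_s_im_neg hz hr
  set a := Complex.I * s with ha
  have hare : a.re = -s.im := by rw [ha]; simp [Complex.mul_re]
  have haim : a.im = s.re := by rw [ha]; simp [Complex.mul_im]
  have ha0 : a ≠ 0 := by
    rw [ha]; exact mul_ne_zero Complex.I_ne_zero (Complex.exp_ne_zero _)
  have hzr : z - (r:ℂ) ≠ 0 := aux_sub_ne hz
  have ha2 : (z - r) * a ^ 2 + (z + r) = 0 := by
    rw [ha, mul_pow, Complex.I_sq, hs2, hc]
    field_simp
    ring
  -- membership in slitPlane
  have hmem_sub : ∀ t : ℝ, ((t:ℂ) - a) ∈ Complex.slitPlane := by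
    intro t
    rw [Complex.mem_slitPlane_iff]
    right
    simp [Complex.sub_im, haim]
    linarith
  have hmem_add : ∀ t : ℝ, ((t:ℂ) + a) ∈ Complex.slitPlane := by
    intro t
    rw [Complex.mem_slitPlane_iff]
    right
    simp [Complex.add_im, haim]
    linarith
  have hsub_ne : ∀ t : ℝ, (t:ℂ) - a ≠ 0 := fun t =>
    Complex.slitPlane_ne_zero (hmem_sub t)
  have hadd_ne : ∀ t : ℝ, (t:ℂ) + a ≠ 0 := fun t =>
    Complex.slitPlane_ne_zero (hmem_add t)
  clear_value a
  set C : ℂ := ((z - r) * a)⁻¹ with hC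
  set H : ℝ → ℂ := fun t => C * (Complex.log ((t:ℂ) - a) - Complex.log ((t:ℂ) + a)) with hH
  -- derivative
  have hderiv : ∀ t : ℝ, HasDerivAt H ((2:ℂ) * ((z - r) * (t:ℂ) ^ 2 + (z + r))⁻¹) t := by
    intro t
    have h1 : HasDerivAt (fun t : ℝ => Complex.log ((t:ℂ) - a)) (((t:ℂ) - a)⁻¹) t := by
      have hcc : HasDerivAt (fun w : ℂ => Complex.log (w - a)) (((t:ℂ) - a)⁻¹) (t:ℂ) := by
        have := (Complex.hasDerivAt_log (hmem_sub t)).comp (t:ℂ)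
          ((hasDerivAt_id ((t:ℂ))).sub_const a)
        simpa [Function.comp_def] using this
      exact hcc.comp_ofReal
    have h2 : HasDerivAt (fun t : ℝ => Complex.log ((t:ℂ) + a)) (((t:ℂ) + a)⁻¹) t := by
      have hcc : HasDerivAt (fun w : ℂ => Complex.log (w + a)) (((t:ℂ) + a)⁻¹) (t:ℂ) := by
        have := (Complex.hasDerivAt_log (hmem_add t)).comp (t:ℂ)
          ((hasDerivAt_id ((t:ℂ))).add_const a)
        simpa [Function.comp_def] using this
      exact hcc.comp_ofReal
    have h3 := ((h1.sub h2).const_mul C)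
    have hden_eq : (z - r) * (t:ℂ) ^ 2 + (z + r) = (z - r) * ((t:ℂ) ^ 2 - a ^ 2) := by
      linear_combination ha2
    have key : C * (((t:ℂ) - a)⁻¹ - ((t:ℂ) + a)⁻¹)
        = (2:ℂ) * ((z - r) * (t:ℂ) ^ 2 + (z + r))⁻¹ := by
      rw [hden_eq, hC, inv_sub_inv (hsub_ne t) (hadd_ne t)]
      rw [show (t:ℂ) + a - ((t:ℂ) - a) = 2 * a by ring,
          show ((t:ℂ) - a) * ((t:ℂ) + a) = (t:ℂ) ^ 2 - a ^ 2 by ring]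
      have ht2 : (t:ℂ) ^ 2 - a ^ 2 ≠ 0 := by
        have h' : (t:ℂ) ^ 2 - a ^ 2 = ((t:ℂ) - a) * ((t:ℂ) + a) := by ring
        rw [h']
        exact mul_ne_zero (hsub_ne t) (hadd_ne t)
      field_simp
    rw [← key]
    exact h3
  -- integrability of the integrand
  have hcont_den : Continuous fun t : ℝ => (z - r) * (t:ℂ) ^ 2 + (z + r) :=
    (continuous_const.mul (Complex.continuous_ofReal.pow 2)).add continuous_const
  have hcont_f : Continuous fun t : ℝ => (2:ℂ) * ((z - r) * (t:ℂ) ^ 2 + (z + r))⁻¹ :=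
    continuous_const.mul (hcont_den.inv₀ fun t => aux_den_ne hz t)
  have hint : IntegrableOn (fun t : ℝ => (2:ℂ) * ((z - r) * (t:ℂ) ^ 2 + (z + r))⁻¹)
      (Set.Ioi (0:ℝ)) := by
    have hg : IntegrableOn (fun t : ℝ => (2 / z.im) * (1 + t ^ 2)⁻¹) (Set.Ioi (0:ℝ)) :=
      (integrable_inv_one_add_sq.const_mul _).integrableOn
    refine Integrable.mono hg hcont_f.aestronglyMeasurable.restrict (ae_of_all _ fun t => ?_)
    have him : ((z - r) * (t:ℂ) ^ 2 + (z + r)).im = z.im * (1 + t ^ 2) := by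
      simp only [Complex.add_im, Complex.mul_im, Complex.sub_im, Complex.sub_re,
        Complex.ofReal_im, Complex.ofReal_re]
      rw [show ((t:ℂ) ^ 2).im = 0 by simp [pow_two, Complex.mul_im],
          show ((t:ℂ) ^ 2).re = t ^ 2 by simp [pow_two, Complex.mul_re]]
      ring
    have hpos : 0 < z.im * (1 + t ^ 2) := by positivity
    have habs : z.im * (1 + t ^ 2) ≤ ‖(z - r) * (t:ℂ) ^ 2 + (z + r)‖ := by
      calc z.im * (1 + t ^ 2) = |((z - r) * (t:ℂ) ^ 2 + (z + r)).im| := by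
            rw [him, abs_of_pos hpos]
        _ ≤ _ := Complex.abs_im_le_norm _
    rw [norm_mul, norm_inv]
    rw [show ‖(2:ℂ)‖ = 2 by norm_num]
    have h1 : (‖(z - r) * (t:ℂ) ^ 2 + (z + r)‖)⁻¹ ≤ (z.im * (1 + t ^ 2))⁻¹ :=
      inv_anti₀ hpos habs
    have h2 : 2 * (‖(z - r) * (t:ℂ) ^ 2 + (z + r)‖)⁻¹
        ≤ 2 * (z.im * (1 + t ^ 2))⁻¹ := by linarith
    refine h2.trans ?_
    rw [Real.norm_eq_abs, abs_of_nonneg (by positivity)]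
    rw [mul_inv]
    rw [div_eq_mul_inv]
    ring_nf
    exact le_refl _
  -- limit of H at infinity
  have hs0 : s ≠ 0 := Complex.exp_ne_zero _
  have hinv : Tendsto (fun t : ℝ => ((t:ℂ))⁻¹) atTop (𝓝 0) := by
    have h1 : Tendsto (fun t : ℝ => t⁻¹) atTop (𝓝 0) := tendsto_inv_atTop_zero
    have h2 := (Complex.continuous_ofReal.tendsto 0).comp h1
    simp only [Function.comp_def, Complex.ofReal_inv, Complex.ofReal_zero] at h2
    exact h2
  have hga : Tendsto (fun t : ℝ => a * ((t:ℂ))⁻¹) atTop (𝓝 0) := by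
    simpa using hinv.const_mul a
  have hnum : Tendsto (fun t : ℝ => 1 - a * ((t:ℂ))⁻¹) atTop (𝓝 1) := by
    simpa using tendsto_const_nhds.sub hga
  have hden2 : Tendsto (fun t : ℝ => 1 + a * ((t:ℂ))⁻¹) atTop (𝓝 1) := by
    simpa using tendsto_const_nhds.add hga
  have hev_sub : ∀ᶠ t : ℝ in atTop, (t:ℂ) - a = (t:ℂ) * (1 - a * ((t:ℂ))⁻¹) := by
    filter_upwards [eventually_gt_atTop (0:ℝ)] with t ht
    have ht0 : (t:ℂ) ≠ 0 := by exact_mod_cast ne_of_gt ht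
    field_simp
  have hev_add : ∀ᶠ t : ℝ in atTop, (t:ℂ) + a = (t:ℂ) * (1 + a * ((t:ℂ))⁻¹) := by
    filter_upwards [eventually_gt_atTop (0:ℝ)] with t ht
    have ht0 : (t:ℂ) ≠ 0 := by exact_mod_cast ne_of_gt ht
    field_simp
  have hρ : Tendsto (fun t : ℝ => ((t:ℂ) - a) / ((t:ℂ) + a)) atTop (𝓝 1) := by
    have hlim : Tendsto (fun t : ℝ => (1 - a * ((t:ℂ))⁻¹) / (1 + a * ((t:ℂ))⁻¹))
        atTop (𝓝 1) := by
      have := hnum.div hden2 one_ne_zero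
      rw [div_one] at this
      exact this
    refine hlim.congr' ?_
    filter_upwards [hev_sub, hev_add, eventually_gt_atTop (0:ℝ)] with t h1 h2 ht
    have ht0 : (t:ℂ) ≠ 0 := by exact_mod_cast ne_of_gt ht
    rw [h1, h2, mul_div_mul_left _ _ ht0]
  have hL1 : Tendsto (fun t : ℝ => Real.log ‖(t:ℂ) - a‖
      - Real.log ‖(t:ℂ) + a‖) atTop (𝓝 0) := by
    have h2 : Tendsto (fun t : ℝ => ‖((t:ℂ) - a) / ((t:ℂ) + a)‖) atTop (𝓝 1) := by
      have := (continuous_norm.tendsto (1:ℂ)).comp hρ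
      simpa [Function.comp_def] using this
    have h3 : Tendsto (fun t : ℝ => Real.log ‖((t:ℂ) - a) / ((t:ℂ) + a)‖)
        atTop (𝓝 0) := by
      have := ((Real.continuousAt_log one_ne_zero).tendsto).comp h2
      simpa [Function.comp_def] using this
    refine h3.congr fun t => ?_
    rw [norm_div, Real.log_div (norm_ne_zero_iff.mpr (hsub_ne t)) (norm_ne_zero_iff.mpr (hadd_ne t))]
  have hL2 : Tendsto (fun t : ℝ => Complex.arg ((t:ℂ) - a) - Complex.arg ((t:ℂ) + a))
      atTop (𝓝 0) := by
    have harg1 : Tendsto (fun t : ℝ => Complex.arg (1 - a * ((t:ℂ))⁻¹)) atTop (𝓝 0) := by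
      have := ((Complex.continuousAt_arg Complex.one_mem_slitPlane).tendsto).comp hnum
      simpa [Complex.arg_one, Function.comp_def] using this
    have harg2 : Tendsto (fun t : ℝ => Complex.arg (1 + a * ((t:ℂ))⁻¹)) atTop (𝓝 0) := by
      have := ((Complex.continuousAt_arg Complex.one_mem_slitPlane).tendsto).comp hden2
      simpa [Complex.arg_one, Function.comp_def] using this
    have := harg1.sub harg2
    rw [sub_zero] at this
    refine this.congr' ?_
    filter_upwards [hev_sub, hev_add, eventually_gt_atTop (0:ℝ)] with t h1 h2 ht
    rw [h1, h2, Complex.arg_real_mul _ ht, Complex.arg_real_mul _ ht]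
  have heq : ∀ t : ℝ, Complex.log ((t:ℂ) - a) - Complex.log ((t:ℂ) + a)
      = ((Real.log ‖(t:ℂ) - a‖ - Real.log ‖(t:ℂ) + a‖ : ℝ) : ℂ)
        + ((Complex.arg ((t:ℂ) - a) - Complex.arg ((t:ℂ) + a) : ℝ) : ℂ) * Complex.I := by
    intro t
    apply Complex.ext
    · simp [Complex.sub_re, Complex.log_re, Complex.add_re, Complex.ofReal_re,
        Complex.mul_re, Complex.I_re, Complex.I_im, Complex.ofReal_im]
    · simp [Complex.sub_im, Complex.log_im, Complex.add_im, Complex.ofReal_im,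
        Complex.mul_im, Complex.I_re, Complex.I_im, Complex.ofReal_re]
  have htend0 : Tendsto (fun t : ℝ => Complex.log ((t:ℂ) - a) - Complex.log ((t:ℂ) + a))
      atTop (𝓝 0) := by
    have h1 := (Complex.continuous_ofReal.tendsto 0).comp hL1
    have h2 := (Complex.continuous_ofReal.tendsto 0).comp hL2
    have h3 := h1.add (h2.mul_const Complex.I)
    simp only [Function.comp_def, Complex.ofReal_zero, zero_add, zero_mul, add_zero] at h3
    exact h3.congr fun t => (heq t).symm
  have htendH : Tendsto H atTop (𝓝 0) := by
    have := htend0.const_mul C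
    simpa using this
  have hH0 : H 0 = C * (-(π:ℂ) * Complex.I) := by
    have h0 : ((0:ℝ):ℂ) - a = -a := by simp
    have h0' : ((0:ℝ):ℂ) + a = a := by simp
    have hlog : Complex.log (-a) - Complex.log a = -(π:ℂ) * Complex.I := by
      apply Complex.ext
      · simp [Complex.sub_re, Complex.log_re, Complex.mul_re, Complex.I_re, Complex.I_im,
          Complex.ofReal_re, Complex.ofReal_im, Complex.neg_re, Complex.neg_im,
          norm_neg]
      · simp only [Complex.sub_im, Complex.log_im]
        rw [Complex.arg_neg_eq_arg_sub_pi_of_im_pos (by rw [haim]; exact hp)]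
        simp [Complex.mul_im, Complex.I_im, Complex.I_re, Complex.neg_re, Complex.neg_im,
          Complex.ofReal_re, Complex.ofReal_im]
    rw [hH]
    simp only
    rw [h0, h0', hlog]
  have hFTC := integral_Ioi_of_hasDerivAt_of_tendsto
      ((hderiv 0).continuousAt.continuousWithinAt) (fun x _ => hderiv x) hint htendH
  rw [hFTC, hH0, hC, ha, zero_sub]
  have hIs : ((z - (r:ℂ)) * (Complex.I * s)) ≠ 0 :=
    mul_ne_zero hzr (mul_ne_zero Complex.I_ne_zero hs0)
  rw [eq_div_iff (mul_ne_zero hzr hs0)]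
  field_simp
lemma aux_c_re (hz : 0 < z.im) (hr : 0 < r) :
    ((z + r) / (z - r)).re = (z.re ^ 2 - r ^ 2 + z.im ^ 2) / Complex.normSq (z - r) := by
  rw [Complex.div_re]
  simp only [Complex.add_im, Complex.sub_im, Complex.add_re, Complex.sub_re,
    Complex.ofReal_re, Complex.ofReal_im]
  ring

lemma aux_V_sq (hz : 0 < z.im) (hr : 0 < r) :
    ((z - r) * Complex.exp ((((1:ℝ)/2 : ℝ) : ℂ) * Complex.log ((z + r) / (z - r)))) ^ 2
      = z ^ 2 - (r:ℂ) ^ 2 := by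
  set c := (z + r) / (z - r) with hc
  have hc0 : c ≠ 0 := div_ne_zero (aux_add_ne hz) (aux_sub_ne hz)
  have hs2 : Complex.exp ((((1:ℝ)/2 : ℝ) : ℂ) * Complex.log c) ^ 2 = c := by
    rw [pow_two, ← Complex.exp_add]
    rw [show (((1:ℝ)/2 : ℝ) : ℂ) * Complex.log c + (((1:ℝ)/2 : ℝ) : ℂ) * Complex.log c
      = Complex.log c by push_cast; ring]
    exact Complex.exp_log hc0
  rw [mul_pow, hs2, hc]
  field_simp [aux_sub_ne hz]
  ring

lemma aux_V_im_pos (hz : 0 < z.im) (hr : 0 < r) :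
    0 < ((z - r) * Complex.exp ((((1:ℝ)/2 : ℝ) : ℂ) * Complex.log ((z + r) / (z - r)))).im := by
  set c := (z + r) / (z - r) with hc
  set s := Complex.exp ((((1:ℝ)/2 : ℝ) : ℂ) * Complex.log c) with hs
  have hc0 : c ≠ 0 := div_ne_zero (aux_add_ne hz) (aux_sub_ne hz)
  have hs2 : s ^ 2 = c := by
    rw [hs, pow_two, ← Complex.exp_add]
    rw [show (((1:ℝ)/2 : ℝ) : ℂ) * Complex.log c + (((1:ℝ)/2 : ℝ) : ℂ) * Complex.log c
      = Complex.log c by push_cast; ring]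
    exact Complex.exp_log hc0
  set p := s.re with hp'
  set q := s.im with hq'
  set x := z.re with hx'
  set v := z.im with hv'
  have hp : 0 < p := aux_s_re_pos hz hr
  have hDpos : 0 < Complex.normSq (z - r) := Complex.normSq_pos.2 (aux_sub_ne hz)
  have hD : Complex.normSq (z - r) = (x - r) ^ 2 + v ^ 2 := by
    rw [Complex.normSq_apply]
    simp only [Complex.sub_re, Complex.sub_im, Complex.ofReal_re, Complex.ofReal_im]
    ring
  set D := (x - r) ^ 2 + v ^ 2 with hDdef
  have hDpos' : 0 < D := hD ▸ hDpos
  -- real and imaginary parts of s^2 = c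
  have hre : (p ^ 2 - q ^ 2) * D = x ^ 2 - r ^ 2 + v ^ 2 := by
    have h1 := congrArg Complex.re hs2
    rw [pow_two, Complex.mul_re, aux_c_re hz hr, hD] at h1
    have : (p * p - q * q) = (x ^ 2 - r ^ 2 + v ^ 2) / D := h1
    field_simp at this
    linarith [this]
  have him : (2 * p * q) * D = -2 * r * v := by
    have h1 := congrArg Complex.im hs2
    rw [pow_two, Complex.mul_im, aux_c_im hz hr, hD] at h1
    have : (p * q + q * p) = (-2 * r * v) / D := h1
    field_simp at this
    linarith [this]
  -- |s|^2 = |c|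
  set A := ‖z + r‖ with hA'
  set B := ‖z - r‖ with hB'
  have hB2 : B ^ 2 = D := by rw [hB', Complex.sq_norm, hD]
  have hBpos : 0 < B := norm_pos_iff.mpr (aux_sub_ne hz)
  have habs : (p ^ 2 + q ^ 2) * D = A * B := by
    have h1 : p ^ 2 + q ^ 2 = Complex.normSq s := by
      rw [Complex.normSq_apply]; ring
    have h2 : Complex.normSq s = ‖c‖ := by
      rw [← Complex.sq_norm, ← hs2, norm_pow]
    have h3 : ‖c‖ = A / B := by rw [hc, norm_div]
    rw [h1, h2, h3, ← hB2]
    field_simp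
  have hAB : 0 ≤ A * B := mul_nonneg (norm_nonneg _) (norm_nonneg _)
  -- goal
  have hgoal : ((z - r) * s).im = (x - r) * q + v * p := by
    rw [Complex.mul_im]
    simp only [Complex.sub_re, Complex.sub_im, Complex.ofReal_re, Complex.ofReal_im, ← hx', ← hv']
    ring
  rw [hgoal]
  have key : 2 * p * D * ((x - r) * q + v * p) = v * (D + A * B) := by
    have hDexp : D = (x - r) ^ 2 + v ^ 2 := hDdef
    linear_combination v * hre + v * habs + (x - r) * him
  nlinarith [mul_pos (mul_pos two_pos hp) hDpos', mul_nonneg hz.le hAB]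

lemma aux_w_ne (r : ℝ) (z : ℂ) (hr : 0 < r) (hz : 0 < z.im) : z ^ 2 - (r:ℂ) ^ 2 ≠ 0 := by
  intro h
  have h2 : (z - r) * (z + r) = 0 := by linear_combination h
  rcases mul_eq_zero.1 h2 with h | h
  · exact aux_sub_ne hz h
  · exact aux_add_ne hz h

lemma aux_w_arg (r : ℝ) (z : ℂ) (hr : 0 < r) (hz : 0 < z.im) : Complex.arg (z ^ 2 - (r:ℂ) ^ 2) ≠ 0 := by
  intro h
  rw [Complex.arg_eq_zero_iff] at h
  obtain ⟨hre, him⟩ := h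
  have him' : (z ^ 2 - (r:ℂ) ^ 2).im = 2 * z.re * z.im := by
    simp [pow_two, Complex.sub_im, Complex.mul_im]; try ring
  have hre' : (z ^ 2 - (r:ℂ) ^ 2).re = z.re * z.re - z.im * z.im - r * r := by
    simp [pow_two, Complex.sub_re, Complex.mul_re]; try ring
  rw [him'] at him
  have hzre : z.re = 0 := by
    rcases mul_eq_zero.1 him with h | h
    · rcases mul_eq_zero.1 h with h | h
      · norm_num at h
      · exact h
    · linarith
  rw [hre', hzre] at hre
  nlinarith

lemma aux_reduce (r : ℝ) (z : ℂ) :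
    stieltjes (arcsineMeasure r) z
      = ∫ x in Set.Ioo (-r) r, ((1 / π) / Real.sqrt (r ^ 2 - x ^ 2)) • (z - (x:ℂ))⁻¹ := by
  have hnn : ∀ x : ℝ, 0 ≤ (1 / π) / Real.sqrt (r ^ 2 - x ^ 2) := fun x =>
    div_nonneg (by positivity) (Real.sqrt_nonneg _)
  have hmeas : Measurable fun x : ℝ =>
      Real.toNNReal (if x ∈ Set.Ioo (-r) r then (1 / π) / Real.sqrt (r ^ 2 - x ^ 2) else 0) := by
    apply Measurable.real_toNNReal
    apply Measurable.ite measurableSet_Ioo _ measurable_const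
    exact Measurable.div measurable_const
      (Real.continuous_sqrt.comp (continuous_const.sub (continuous_pow 2))).measurable
  unfold stieltjes arcsineMeasure
  rw [show (fun x : ℝ => ENNReal.ofReal
        (if x ∈ Set.Ioo (-r) r then (1 / π) / Real.sqrt (r ^ 2 - x ^ 2) else 0))
      = fun x : ℝ => ((Real.toNNReal (if x ∈ Set.Ioo (-r) r
          then (1 / π) / Real.sqrt (r ^ 2 - x ^ 2) else 0) : ℝ≥0) : ENNReal) from rfl]
  rw [integral_withDensity_eq_integral_smul hmeas]
  rw [← integral_indicator measurableSet_Ioo]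
  congr 1
  funext x
  by_cases hx : x ∈ Set.Ioo (-r) r
  · rw [Set.indicator_of_mem hx]
    simp only [hx, if_pos, NNReal.smul_def, Real.coe_toNNReal', max_eq_left (hnn x)]
  · rw [Set.indicator_of_notMem hx]
    simp [hx]

lemma aux_z_sub_real_ne (hz : 0 < z.im) (x : ℝ) : z - (x:ℂ) ≠ 0 := by
  intro h; have := congrArg Complex.im h; simp at this; linarith

lemma aux_CoV (hr : 0 < r) (hz : 0 < z.im) :
    (∫ x in Set.Ioo (-r) r, ((1 / π) / Real.sqrt (r ^ 2 - x ^ 2)) • (z - (x:ℂ))⁻¹)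
      = ∫ t in Set.Ioi (0:ℝ), ((1 / π : ℝ)) • ((2:ℂ) * ((z - r) * (t:ℂ) ^ 2 + (z + r))⁻¹) := by
  set φ : ℝ → ℝ := fun t => r * (t ^ 2 - 1) / (t ^ 2 + 1) with hφ
  set φ' : ℝ → ℝ := fun t => 4 * r * t / (t ^ 2 + 1) ^ 2 with hφ'
  have hden_pos : ∀ t : ℝ, (0:ℝ) < t ^ 2 + 1 := fun t => by positivity
  have himg : φ '' Set.Ioi 0 = Set.Ioo (-r) r := by
    apply Set.eq_of_subset_of_subset
    · rintro x ⟨t, ht, rfl⟩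
      have ht' : 0 < t := ht
      constructor
      · have : -r * (t ^ 2 + 1) < r * (t ^ 2 - 1) := by nlinarith [mul_pos hr (mul_pos ht' ht')]
        rw [hφ]
        simp only
        rw [lt_div_iff₀ (hden_pos t)]
        linarith
      · have : r * (t ^ 2 - 1) < r * (t ^ 2 + 1) := by nlinarith
        rw [hφ]
        simp only
        rw [div_lt_iff₀ (hden_pos t)]
        linarith
    · intro x hx
      obtain ⟨hx1, hx2⟩ := hx
      have hrx : 0 < r - x := by linarith
      have hrx' : 0 < r + x := by linarith
      refine ⟨Real.sqrt ((r + x) / (r - x)), ?_, ?_⟩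
      · exact Real.sqrt_pos.2 (div_pos hrx' hrx)
      · have ht2 : Real.sqrt ((r + x) / (r - x)) ^ 2 = (r + x) / (r - x) :=
          Real.sq_sqrt (le_of_lt (div_pos hrx' hrx))
        rw [hφ]
        simp only
        rw [ht2]
        field_simp
        ring
  have hinj : Set.InjOn φ (Set.Ioi 0) := by
    intro t1 h1 t2 h2 h
    rw [hφ] at h
    simp only at h
    have h1' : (0:ℝ) < t1 := h1
    have h2' : (0:ℝ) < t2 := h2
    rw [div_eq_div_iff (ne_of_gt (hden_pos t1)) (ne_of_gt (hden_pos t2))] at h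
    have hsq : t1 ^ 2 = t2 ^ 2 := by nlinarith
    nlinarith [sq_nonneg (t1 - t2), sq_nonneg (t1 + t2)]
  have hder : ∀ t ∈ Set.Ioi (0:ℝ), HasDerivWithinAt φ (φ' t) (Set.Ioi 0) t := by
    intro t ht
    have h1 : HasDerivAt (fun t : ℝ => r * (t ^ 2 - 1)) (r * (2 * t)) t := by
      simpa using ((hasDerivAt_pow 2 t).sub_const 1).const_mul r
    have h2 : HasDerivAt (fun t : ℝ => t ^ 2 + 1) (2 * t) t := by
      simpa using (hasDerivAt_pow 2 t).add_const 1
    have h3 := h1.div h2 (ne_of_gt (hden_pos t))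
    have : HasDerivAt φ (φ' t) t := by
      refine h3.congr_deriv ?_
      rw [hφ']
      field_simp
      ring
    exact this.hasDerivWithinAt
  rw [← himg, integral_image_eq_integral_abs_deriv_smul measurableSet_Ioi hder hinj]
  apply setIntegral_congr_fun measurableSet_Ioi
  intro t ht
  have ht' : (0:ℝ) < t := ht
  have hsq : Real.sqrt (r ^ 2 - (φ t) ^ 2) = 2 * r * t / (t ^ 2 + 1) := by
    have h1 : r ^ 2 - (φ t) ^ 2 = (2 * r * t / (t ^ 2 + 1)) ^ 2 := by
      rw [hφ]
      field_simp
      ring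
    rw [h1, Real.sqrt_sq (by positivity)]
  have habs : |φ' t| = 4 * r * t / (t ^ 2 + 1) ^ 2 := by
    rw [hφ']
    exact abs_of_pos (by positivity)
  have hzden := aux_den_ne (r := r) hz t
  have hzφ : z - ((φ t : ℝ) : ℂ) ≠ 0 := aux_z_sub_real_ne hz _
  have ht1c : ((t:ℂ) ^ 2 + 1) ≠ 0 := by
    have h2 : ((t:ℂ) ^ 2 + 1) = ((t ^ 2 + 1 : ℝ) : ℂ) := by push_cast; ring
    rw [h2]
    exact_mod_cast ne_of_gt (hden_pos t)
  have hrel : (z - ((φ t : ℝ) : ℂ)) * ((t:ℂ) ^ 2 + 1) = (z - r) * (t:ℂ) ^ 2 + (z + r) := by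
    simp only [hφ]
    push_cast
    field_simp
    ring
  simp only
  rw [habs, hsq]
  rw [smul_smul]
  rw [Complex.real_smul, Complex.real_smul]
  have hinv : (z - ((φ t : ℝ) : ℂ))⁻¹ = ((t:ℂ) ^ 2 + 1) * ((z - r) * (t:ℂ) ^ 2 + (z + r))⁻¹ := by
    rw [← hrel, mul_inv]
    field_simp
  rw [hinv]
  have hcoef : ((4 * r * t / (t ^ 2 + 1) ^ 2 * ((1 / π) / (2 * r * t / (t ^ 2 + 1))) : ℝ) : ℂ)
      * ((t:ℂ) ^ 2 + 1) = ((1 / π : ℝ) : ℂ) * 2 := by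
    have hπ : π ≠ 0 := ne_of_gt Real.pi_pos
    have htne : t ≠ 0 := ne_of_gt ht'
    have hrne : r ≠ 0 := ne_of_gt hr
    have h1 : (4 * r * t / (t ^ 2 + 1) ^ 2 * ((1 / π) / (2 * r * t / (t ^ 2 + 1))) : ℝ)
        = 2 / (π * (t ^ 2 + 1)) := by
      field_simp
      ring
    rw [h1]
    push_cast
    have hπc : ((π:ℝ):ℂ) ≠ 0 := by exact_mod_cast hπ
    have hne2 : ((t:ℂ) ^ 2 * (π:ℝ) + (π:ℝ)) ≠ 0 := by
      have he : ((t:ℂ) ^ 2 * (π:ℝ) + (π:ℝ)) = ((t:ℂ) ^ 2 + 1) * (π:ℝ) := by ring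
      rw [he]
      exact mul_ne_zero ht1c hπc
    field_simp [hπc, ht1c, hne2]
  calc ((4 * r * t / (t ^ 2 + 1) ^ 2 * ((1 / π) / (2 * r * t / (t ^ 2 + 1))) : ℝ) : ℂ)
        * (((t:ℂ) ^ 2 + 1) * ((z - r) * (t:ℂ) ^ 2 + (z + r))⁻¹)
      = (((4 * r * t / (t ^ 2 + 1) ^ 2 * ((1 / π) / (2 * r * t / (t ^ 2 + 1))) : ℝ) : ℂ)
        * ((t:ℂ) ^ 2 + 1)) * ((z - r) * (t:ℂ) ^ 2 + (z + r))⁻¹ := by ring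
    _ = (((1 / π : ℝ) : ℂ) * 2) * ((z - r) * (t:ℂ) ^ 2 + (z + r))⁻¹ := by rw [hcoef]
    _ = ((1 / π : ℝ) : ℂ) * (2 * ((z - r) * (t:ℂ) ^ 2 + (z + r))⁻¹) := by ring

end


theorem stieltjes_arcsine_eq (r : ℝ) (hr : 0 < r) (z : ℂ) (hz : 0 < z.im) :
    stieltjes (arcsineMeasure r) z = 1 / sqrtUpper (z ^ 2 - (r : ℂ) ^ 2) := by
  have h1 := aux_reduce r z
  have h2 := aux_CoV hr hz
  have h3 := aux_integral_Ioi hz hr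
  rw [h1, h2, integral_smul, h3]
  have hzr : z - (r:ℂ) ≠ 0 := aux_sub_ne hz
  have hs0 : Complex.exp ((((1:ℝ)/2 : ℝ) : ℂ) * Complex.log ((z + r) / (z - r))) ≠ 0 :=
    Complex.exp_ne_zero _
  have hsu : sqrtUpper (z ^ 2 - (r:ℂ) ^ 2)
      = (z - r) * Complex.exp ((((1:ℝ)/2 : ℝ) : ℂ) * Complex.log ((z + r) / (z - r))) :=
    sqrtUpper_eq (aux_w_ne r z hr hz) (aux_w_arg r z hr hz) (aux_V_sq hz hr)
      (aux_V_im_pos hz hr)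
  rw [hsu, Complex.real_smul]
  have hπ : ((π:ℝ):ℂ) ≠ 0 := by
    exact_mod_cast ne_of_gt Real.pi_pos
  push_cast
  rw [one_div]
  field_simp
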